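/- arXiv:1006.5189 — 2 statements merged into one kernel-verified Lean document; each statement's English description precedes it below -/
import Mathlib

section
/- Let {Q_j} be a family of closed cubes in ℝ^d with pairwise disjoint interiors whose union is dense in ℝ^d, and suppose there exist C, β > 0 such that whenever the (1+β)⁴-dilates Q_i**** and Q_j**** intersect, then d(Q_i) ≤ C d(Q_j). Then there exists a constant C' such that Σ_j 1_{Q_j****}(x) ≤ C' for every x ∈ ℝ^d, i.e. the dilated cubes have bounded overlap. -/
open MeasureTheory Real Set
open scoped ENNReal

/-- The closed cube with center `c` and diameter `2 * r` in the sup-metric sense: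
`r` is half of the side length. -/
def cube {d : ℕ} (c : EuclideanSpace ℝ (Fin d)) (r : ℝ) : Set (EuclideanSpace ℝ (Fin d)) :=
  {x | ∀ i : Fin d, |x i - c i| ≤ r}

/-- The open cube. -/
def ocube {d : ℕ} (c : EuclideanSpace ℝ (Fin d)) (r : ℝ) : Set (EuclideanSpace ℝ (Fin d)) :=
  {x | ∀ i : Fin d, |x i - c i| < r}

lemma ocube_isOpen {d : ℕ} (c : EuclideanSpace ℝ (Fin d)) (r : ℝ) :
    IsOpen (ocube c r) := by
  have : ocube c r = ⋂ i : Fin d, (fun x : EuclideanSpace ℝ (Fin d) => x i) ⁻¹' (Metric.ball (c i) r) := by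
    ext x; simp [ocube, Real.dist_eq]
  rw [this]
  exact isOpen_iInter_of_finite fun i =>
    (Metric.isOpen_ball).preimage ((continuous_apply i).comp (PiLp.continuous_ofLp 2 _))

lemma ocube_subset_interior {d : ℕ} (c : EuclideanSpace ℝ (Fin d)) (r : ℝ) :
    ocube c r ⊆ interior (cube c r) :=
  interior_maximal (fun x hx i => (hx i).le) (ocube_isOpen c r)

lemma volume_preimage_eq {d : ℕ} (S : Set (EuclideanSpace ℝ (Fin d)))
    (hS : MeasurableSet S) :
    volume ((MeasurableEquiv.toLp 2 (Fin d → ℝ)) ⁻¹' S) = volume S :=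
  (MeasurePreserving.symm _
    (EuclideanSpace.volume_preserving_symm_measurableEquiv_toLp (Fin d))).measure_preimage
    hS.nullMeasurableSet

lemma volume_ocube {d : ℕ} (c : EuclideanSpace ℝ (Fin d)) (r : ℝ) :
    volume (ocube c r) = ENNReal.ofReal (2 * r) ^ d := by
  rw [← volume_preimage_eq _ (ocube_isOpen c r).measurableSet]
  have : (MeasurableEquiv.toLp 2 (Fin d → ℝ)) ⁻¹' (ocube c r)
      = Set.pi Set.univ (fun i : Fin d => Set.Ioo (c i - r) (c i + r)) := by
    ext y
    simp only [Set.mem_preimage, Set.mem_pi, Set.mem_univ, Set.mem_Ioo, forall_true_left,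
      ocube, Set.mem_setOf_eq]
    have hy : ∀ i, ((MeasurableEquiv.toLp 2 (Fin d → ℝ)) y) i = y i := fun i => rfl
    constructor
    · intro h i
      have := h i
      rw [hy, abs_lt] at this
      constructor <;> linarith [this.1, this.2]
    · intro h i
      rw [hy, abs_lt]
      constructor <;> linarith [(h i).1, (h i).2]
  rw [this, volume_pi_pi]
  have h2 : ∀ i : Fin d, ENNReal.ofReal (c i + r - (c i - r)) = ENNReal.ofReal (2 * r) := by
    intro i; congr 1; ring
  simp only [Real.volume_Ioo, h2, Finset.prod_const, Finset.card_univ, Fintype.card_fin]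

lemma cube_isClosed {d : ℕ} (c : EuclideanSpace ℝ (Fin d)) (r : ℝ) :
    IsClosed (cube c r) := by
  have : cube c r = ⋂ i : Fin d, (fun x : EuclideanSpace ℝ (Fin d) => x i) ⁻¹' (Metric.closedBall (c i) r) := by
    ext x; simp [cube, Real.dist_eq]
  rw [this]
  exact isClosed_iInter fun i =>
    (Metric.isClosed_closedBall).preimage ((continuous_apply i).comp (PiLp.continuous_ofLp 2 _))

lemma volume_cube {d : ℕ} (c : EuclideanSpace ℝ (Fin d)) (r : ℝ) :
    volume (cube c r) = ENNReal.ofReal (2 * r) ^ d := by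
  rw [← volume_preimage_eq _ (cube_isClosed c r).measurableSet]
  have : (MeasurableEquiv.toLp 2 (Fin d → ℝ)) ⁻¹' (cube c r)
      = Set.pi Set.univ (fun i : Fin d => Set.Icc (c i - r) (c i + r)) := by
    ext y
    simp only [Set.mem_preimage, Set.mem_pi, Set.mem_univ, Set.mem_Icc, forall_true_left,
      cube, Set.mem_setOf_eq]
    have hy : ∀ i, ((MeasurableEquiv.toLp 2 (Fin d → ℝ)) y) i = y i := fun i => rfl
    constructor
    · intro h i
      have := h i
      rw [hy, abs_le] at this
      constructor <;> linarith [this.1, this.2]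
    · intro h i
      rw [hy, abs_le]
      constructor <;> linarith [(h i).1, (h i).2]
  rw [this, volume_pi_pi]
  have h2 : ∀ i : Fin d, ENNReal.ofReal (c i + r - (c i - r)) = ENNReal.ofReal (2 * r) := by
    intro i; congr 1; ring
  simp only [Real.volume_Icc, h2, Finset.prod_const, Finset.card_univ, Fintype.card_fin]

lemma cube_subset_cube {d : ℕ} {c₁ c₂ : EuclideanSpace ℝ (Fin d)} {r₁ r₂ : ℝ}
    (h : ∀ i, |c₁ i - c₂ i| + r₁ ≤ r₂) : cube c₁ r₁ ⊆ cube c₂ r₂ := by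
  intro y hy i
  calc |y i - c₂ i| ≤ |y i - c₁ i| + |c₁ i - c₂ i| := abs_sub_le _ _ _
    _ ≤ r₁ + |c₁ i - c₂ i| := by linarith [hy i]
    _ ≤ r₂ := by linarith [h i]

theorem dilated_cubes_bounded_overlap (d : ℕ) (hd : 1 ≤ d)
    (c : ℕ → EuclideanSpace ℝ (Fin d)) (r : ℕ → ℝ) (hr : ∀ j, 0 < r j)
    (β C : ℝ) (hβ : 0 < β) (hC : 0 < C)
    (hdisj : ∀ i j, i ≠ j →
      Disjoint (interior (cube (c i) (r i))) (interior (cube (c j) (r j))))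
    (hdense : closure (⋃ j, cube (c j) (r j)) = Set.univ)
    (hcomp : ∀ i j,
      ((cube (c i) ((1 + β) ^ 4 * r i)) ∩ (cube (c j) ((1 + β) ^ 4 * r j))).Nonempty →
      r i ≤ C * r j) :
    ∃ C' : ℕ, ∀ x : EuclideanSpace ℝ (Fin d),
      ({j : ℕ | x ∈ cube (c j) ((1 + β) ^ 4 * r j)}).Finite ∧
      ({j : ℕ | x ∈ cube (c j) ((1 + β) ^ 4 * r j)}).ncard ≤ C' := by
  set K1 : ℝ := (1 + (1 + β) ^ 4) * C ^ 2 with hK1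
  have hK1pos : 0 < K1 := by positivity
  set K : ℝ := K1 ^ d with hKdef
  refine ⟨⌈K⌉₊, fun x => ?_⟩
  set S := {j : ℕ | x ∈ cube (c j) ((1 + β) ^ 4 * r j)} with hSdef
  rcases Set.eq_empty_or_nonempty S with hSe | ⟨j₀, hj₀⟩
  · simp [hSe]
  -- radii of cubes in S are comparable to r j₀
  have hmem : ∀ j ∈ S, x ∈ cube (c j) ((1 + β) ^ 4 * r j) := fun j hj => hj
  have hle : ∀ j ∈ S, r j ≤ C * r j₀ := fun j hj =>
    hcomp j j₀ ⟨x, hmem j hj, hmem j₀ hj₀⟩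
  have hge : ∀ j ∈ S, r j₀ / C ≤ r j := by
    intro j hj
    have := hcomp j₀ j ⟨x, hmem j₀ hj₀, hmem j hj⟩
    rw [div_le_iff₀ hC]
    linarith
  -- the big cube
  set R : ℝ := (1 + (1 + β) ^ 4) * (C * r j₀) with hRdef
  have hsub : ∀ j ∈ S, cube (c j) (r j) ⊆ cube x R := by
    intro j hj
    apply cube_subset_cube
    intro i
    have h1 : |x i - (c j) i| ≤ (1 + β) ^ 4 * r j := hmem j hj i
    have h2 : |(c j) i - x i| = |x i - (c j) i| := abs_sub_comm _ _
    have h3 : r j ≤ C * r j₀ := hle j hj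
    have h4 : (0:ℝ) < (1 + β) ^ 4 := by positivity
    rw [h2]
    nlinarith
  -- key finset bound
  have key : ∀ T : Finset ℕ, ↑T ⊆ S → T.card ≤ ⌈K⌉₊ := by
    intro T hT
    have hdisjT : (↑T : Set ℕ).PairwiseDisjoint (fun j => ocube (c j) (r j)) := by
      intro i hi j hj hij
      exact ((hdisj i j hij).mono (ocube_subset_interior _ _) (ocube_subset_interior _ _))
    have hsum : ∑ j ∈ T, volume (ocube (c j) (r j)) = volume (⋃ j ∈ T, ocube (c j) (r j)) :=
      (measure_biUnion_finset hdisjT fun j _ => (ocube_isOpen _ _).measurableSet).symm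
    have hub : volume (⋃ j ∈ T, ocube (c j) (r j)) ≤ volume (cube x R) := by
      apply measure_mono
      apply Set.iUnion₂_subset
      intro j hj
      exact (fun y hy => hsub j (hT hj) (fun i => (hy i).le))
    set a : ℝ := 2 * (r j₀ / C) with hadef
    have hapos : 0 < a := mul_pos two_pos (div_pos (hr j₀) hC)
    have hlb : (T.card : ℝ≥0∞) * ENNReal.ofReal a ^ d ≤ ∑ j ∈ T, volume (ocube (c j) (r j)) := by
      have : ∀ j ∈ T, ENNReal.ofReal a ^ d ≤ volume (ocube (c j) (r j)) := by
        intro j hj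
        rw [volume_ocube]
        refine pow_le_pow_left' (ENNReal.ofReal_le_ofReal ?_) d
        have := hge j (hT hj)
        rw [hadef]
        linarith
      have h := Finset.card_nsmul_le_sum T _ _ this
      simpa [nsmul_eq_mul] using h
    have hB : volume (cube x R) = ENNReal.ofReal K1 ^ d * ENNReal.ofReal a ^ d := by
      have h2 : 2 * R = K1 * a := by
        rw [hRdef, hadef, hK1]; field_simp
      rw [volume_cube, ← mul_pow, ← ENNReal.ofReal_mul hK1pos.le, h2]
    have hmain : (T.card : ℝ≥0∞) * ENNReal.ofReal a ^ d ≤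
        ENNReal.ofReal K1 ^ d * ENNReal.ofReal a ^ d := by
      calc (T.card : ℝ≥0∞) * ENNReal.ofReal a ^ d
          ≤ ∑ j ∈ T, volume (ocube (c j) (r j)) := hlb
        _ = volume (⋃ j ∈ T, ocube (c j) (r j)) := hsum
        _ ≤ volume (cube x R) := hub
        _ = _ := hB
    have ha0 : (ENNReal.ofReal a ^ d : ℝ≥0∞) ≠ 0 :=
      pow_ne_zero d (by simp [ENNReal.ofReal_eq_zero, not_le, hapos])
    have hatop : (ENNReal.ofReal a ^ d : ℝ≥0∞) ≠ ⊤ :=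
      ENNReal.pow_ne_top ENNReal.ofReal_ne_top
    have hcard : (T.card : ℝ≥0∞) ≤ ENNReal.ofReal K1 ^ d :=
      (ENNReal.mul_le_mul_iff_left ha0 hatop).mp hmain
    have hcard2 : (T.card : ℝ≥0∞) ≤ (⌈K⌉₊ : ℝ≥0∞) := by
      refine hcard.trans ?_
      rw [← ENNReal.ofReal_pow hK1pos.le, ← hKdef, ← ENNReal.ofReal_natCast]
      exact ENNReal.ofReal_le_ofReal (Nat.le_ceil K)
    exact_mod_cast hcard2
  have hfin : S.Finite := by
    by_contra hinf
    obtain ⟨T, hTsub, hTcard⟩ := Set.Infinite.exists_subset_card_eq hinf (⌈K⌉₊ + 1)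
    have := key T hTsub
    omega
  refine ⟨hfin, ?_⟩
  rw [Set.ncard_eq_toFinset_card S hfin]
  exact key hfin.toFinset (by simp)
end

section
/- Let V ∈ L¹_loc(ℝ), V ≥ 0, V ≢ 0. Then there exists a collection Q of dyadic intervals of ℝ with pairwise disjoint interiors covering ℝ up to measure zero such that each Q ∈ Q is a maximal dyadic interval satisfying |Q| ∫_{16Q} V(y) dy ≤ 1. -/
open MeasureTheory Real Set

/-- The dyadic interval `[k 2^n, (k+1) 2^n]`. -/
def dyadicI (k n : ℤ) : Set ℝ := Icc ((k : ℝ) * 2 ^ n) (((k : ℝ) + 1) * 2 ^ n)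

/-- The interval `16 Q`: same center as `dyadicI k n`, sixteen times the length. -/
def bigI (k n : ℤ) : Set ℝ :=
  Icc (((k : ℝ) + 1 / 2) * 2 ^ n - 8 * 2 ^ n) (((k : ℝ) + 1 / 2) * 2 ^ n + 8 * 2 ^ n)

/-- The stopping-time condition `|Q| ∫_{16Q} V ≤ 1` for `Q = dyadicI k n`. -/
def stopCond (V : ℝ → ℝ) (k n : ℤ) : Prop :=
  (2 : ℝ) ^ n * ∫ y in bigI k n, V y ≤ 1

lemma two_zpow_pos' (n : ℤ) : (0:ℝ) < 2 ^ n := zpow_pos (by norm_num) n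

lemma dyadicI_le (k n : ℤ) : (k:ℝ) * 2 ^ n ≤ ((k:ℝ) + 1) * 2 ^ n := by
  nlinarith [two_zpow_pos' n]

lemma subset_params {k n k' n' : ℤ} (h : dyadicI k n ⊆ dyadicI k' n') :
    (k':ℝ) * 2 ^ n' ≤ (k:ℝ) * 2 ^ n ∧ ((k:ℝ) + 1) * 2 ^ n ≤ ((k':ℝ) + 1) * 2 ^ n' := by
  rw [dyadicI, dyadicI, Icc_subset_Icc_iff (dyadicI_le k n)] at h
  exact h

lemma scale_le {k n k' n' : ℤ} (h : dyadicI k n ⊆ dyadicI k' n') : n ≤ n' := by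
  obtain ⟨h1, h2⟩ := subset_params h
  have : (2:ℝ) ^ n ≤ 2 ^ n' := by nlinarith
  exact (zpow_le_zpow_iff_right₀ (by norm_num : (1:ℝ) < 2)).mp this

lemma ancestor_unique {k n k' k'' m : ℤ} (h1 : dyadicI k n ⊆ dyadicI k' m)
    (h2 : dyadicI k n ⊆ dyadicI k'' m) : k' = k'' := by
  obtain ⟨a1, b1⟩ := subset_params h1
  obtain ⟨a2, b2⟩ := subset_params h2
  have hm := two_zpow_pos' m
  have hn := two_zpow_pos' n
  have h3 : (k':ℝ) < (k'':ℝ) + 1 := by nlinarith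
  have h4 : (k'':ℝ) < (k':ℝ) + 1 := by nlinarith
  have h3' : k' < k'' + 1 := by exact_mod_cast h3
  have h4' : k'' < k' + 1 := by exact_mod_cast h4
  omega

lemma dyadicI_inj {k n k' n' : ℤ} (h : dyadicI k n = dyadicI k' n') : k = k' ∧ n = n' := by
  obtain ⟨a1, b1⟩ := subset_params h.le
  obtain ⟨a2, b2⟩ := subset_params h.ge
  have hp : (2:ℝ) ^ n = 2 ^ n' := by nlinarith
  have hn : n = n' := le_antisymm
    ((zpow_le_zpow_iff_right₀ (by norm_num : (1:ℝ) < 2)).mp hp.le)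
    ((zpow_le_zpow_iff_right₀ (by norm_num : (1:ℝ) < 2)).mp hp.ge)
  subst hn
  have hm := two_zpow_pos' n
  have : (k:ℝ) = k' := by nlinarith
  exact ⟨by exact_mod_cast this, rfl⟩

lemma bigI_mono {k n k' n' : ℤ} (h : dyadicI k n ⊆ dyadicI k' n') : bigI k n ⊆ bigI k' n' := by
  obtain ⟨a1, b1⟩ := subset_params h
  have hle : n ≤ n' := scale_le h
  have hp : (2:ℝ) ^ n ≤ 2 ^ n' := (zpow_le_zpow_right₀ (by norm_num : (1:ℝ) ≤ 2) hle)
  have hn := two_zpow_pos' n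
  apply Icc_subset_Icc <;> nlinarith

lemma integrableOn_Icc (V : ℝ → ℝ) (hVloc : LocallyIntegrable V volume) (a b : ℝ) :
    IntegrableOn V (Icc a b) volume := hVloc.integrableOn_isCompact isCompact_Icc

lemma stopCond_mono (V : ℝ → ℝ) (hVloc : LocallyIntegrable V volume) (hV0 : ∀ x, 0 ≤ V x)
    {k n k' n' : ℤ} (h : dyadicI k n ⊆ dyadicI k' n') (hs : stopCond V k' n') :
    stopCond V k n := by
  have hle : n ≤ n' := scale_le h
  have hp : (2:ℝ) ^ n ≤ 2 ^ n' := zpow_le_zpow_right₀ (by norm_num : (1:ℝ) ≤ 2) hle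
  have h1 : ∫ y in bigI k n, V y ≤ ∫ y in bigI k' n', V y :=
    setIntegral_mono_set (integrableOn_Icc V hVloc _ _)
      (Filter.Eventually.of_forall fun y => hV0 y)
      (HasSubset.Subset.eventuallyLE (bigI_mono h))
  have h0 : 0 ≤ ∫ y in bigI k n, V y :=
    setIntegral_nonneg measurableSet_Icc fun y _ => hV0 y
  calc (2:ℝ) ^ n * ∫ y in bigI k n, V y
      ≤ 2 ^ n' * ∫ y in bigI k' n', V y := mul_le_mul hp h1 h0 (two_zpow_pos' n').le
    _ ≤ 1 := hs

lemma mem_chain (x : ℝ) (n : ℤ) : x ∈ dyadicI ⌊x / 2 ^ n⌋ n := by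
  have hn := two_zpow_pos' n
  constructor
  · have := Int.floor_le (x / 2 ^ n)
    calc (⌊x / 2 ^ n⌋ : ℝ) * 2 ^ n ≤ (x / 2 ^ n) * 2 ^ n := by nlinarith
      _ = x := div_mul_cancel₀ x hn.ne'
  · have := Int.lt_floor_add_one (x / 2 ^ n)
    have h2 : x = (x / 2 ^ n) * 2 ^ n := (div_mul_cancel₀ x hn.ne').symm
    nlinarith

lemma chain_step (x : ℝ) (n : ℤ) :
    dyadicI ⌊x / 2 ^ n⌋ n ⊆ dyadicI ⌊x / 2 ^ (n + 1)⌋ (n + 1) := by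
  have hn := two_zpow_pos' n
  have hpow : (2:ℝ) ^ (n + 1) = 2 * 2 ^ n := by
    rw [zpow_add_one₀ (by norm_num : (2:ℝ) ≠ 0)]; ring
  set a := ⌊x / 2 ^ n⌋ with ha
  set b := ⌊x / 2 ^ (n + 1)⌋ with hb
  have hdiv : x / 2 ^ (n + 1) = (x / 2 ^ n) / 2 := by rw [hpow]; ring
  have hfl : (b : ℝ) ≤ (x / 2 ^ n) / 2 := by rw [← hdiv]; exact Int.floor_le _
  have hfu : (x / 2 ^ n) / 2 < (b : ℝ) + 1 := by rw [← hdiv]; exact Int.lt_floor_add_one _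
  have h1 : 2 * b ≤ a := by
    rw [ha]
    apply Int.le_floor.mpr
    push_cast
    linarith
  have h2 : a ≤ 2 * b + 1 := by
    have : a < 2 * b + 2 := by
      rw [ha]
      apply Int.floor_lt.mpr
      push_cast
      linarith
    omega
  have h1' : (2 * (b:ℝ)) ≤ (a : ℝ) := by exact_mod_cast h1
  have h2' : (a : ℝ) ≤ 2 * (b:ℝ) + 1 := by exact_mod_cast h2
  apply Icc_subset_Icc <;> rw [hpow] <;> nlinarith

lemma chain_mono (x : ℝ) {n m : ℤ} (h : n ≤ m) :
    dyadicI ⌊x / 2 ^ n⌋ n ⊆ dyadicI ⌊x / 2 ^ m⌋ m := by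
  obtain ⟨d, rfl⟩ : ∃ d : ℕ, m = n + d := ⟨(m - n).toNat, by omega⟩
  clear h
  induction d with
  | zero => simp
  | succ d ih =>
      have hstep := chain_step x (n + d)
      have : ((n : ℤ) + (d + 1 : ℕ)) = (n + d) + 1 := by push_cast; ring
      rw [this]
      exact ih.trans hstep

lemma subset_of_interior_inter {k n k' n' : ℤ} (hnn : n ≤ n')
    (h : ¬ Disjoint (interior (dyadicI k n)) (interior (dyadicI k' n'))) :
    dyadicI k n ⊆ dyadicI k' n' := by
  rw [Set.not_disjoint_iff] at h
  obtain ⟨y, hy1, hy2⟩ := h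
  rw [dyadicI, interior_Icc, mem_Ioo] at hy1 hy2
  set d := (n' - n).toNat with hd
  have hd' : n' = n + (d : ℤ) := by omega
  have hpow : (2:ℝ) ^ n' = 2 ^ n * 2 ^ d := by
    rw [hd', zpow_add₀ (by norm_num : (2:ℝ) ≠ 0), zpow_natCast]
  have hn := two_zpow_pos' n
  rw [hpow] at hy2
  have e1 : ((k':ℝ) * 2 ^ d) * 2 ^ n < ((k:ℝ) + 1) * 2 ^ n := by nlinarith [hy1.2, hy2.1]
  have e2 : (k:ℝ) * 2 ^ n < (((k':ℝ) + 1) * 2 ^ d) * 2 ^ n := by nlinarith [hy1.1, hy2.2]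
  have f1 : (k':ℝ) * 2 ^ d < (k:ℝ) + 1 := lt_of_mul_lt_mul_right e1 hn.le
  have f2 : (k:ℝ) < ((k':ℝ) + 1) * 2 ^ d := lt_of_mul_lt_mul_right e2 hn.le
  have g1 : k' * 2 ^ d < k + 1 := by exact_mod_cast f1
  have g2 : k < (k' + 1) * 2 ^ d := by exact_mod_cast f2
  have g1' : k' * 2 ^ d ≤ k := by omega
  have g2' : k + 1 ≤ (k' + 1) * 2 ^ d := by omega
  have r1 : ((k':ℝ) * 2 ^ d) ≤ (k : ℝ) := by exact_mod_cast g1'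
  have r2 : ((k:ℝ) + 1) ≤ ((k':ℝ) + 1) * 2 ^ d := by exact_mod_cast g2'
  apply Icc_subset_Icc <;> rw [hpow] <;> nlinarith [mul_le_mul_of_nonneg_right r1 hn.le,
    mul_le_mul_of_nonneg_right r2 hn.le]

lemma integrableOn_bigI (V : ℝ → ℝ) (hVloc : LocallyIntegrable V volume) (k n : ℤ) :
    IntegrableOn V (bigI k n) volume := by
  rw [bigI]; exact integrableOn_Icc V hVloc _ _

lemma exists_pos_integral (V : ℝ → ℝ) (hVloc : LocallyIntegrable V volume)
    (hV0 : ∀ x, 0 ≤ V x) (hVne : ¬ (∀ᵐ x : ℝ ∂volume, V x = 0)) :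
    ∃ R : ℕ, 0 < ∫ y in Icc (-(R:ℝ)) (R:ℝ), V y := by
  by_contra hc
  push_neg at hc
  apply hVne
  have hae : ∀ R : ℕ, volume ({x : ℝ | ¬ V x = 0} ∩ Icc (-(R:ℝ)) R) = 0 := by
    intro R
    have hint : IntegrableOn V (Icc (-(R:ℝ)) R) volume := integrableOn_Icc V hVloc _ _
    have h0 : ∫ y in Icc (-(R:ℝ)) R, V y = 0 :=
      le_antisymm (hc R) (setIntegral_nonneg measurableSet_Icc fun y _ => hV0 y)
    have hz := (integral_eq_zero_iff_of_nonneg (fun y => hV0 y) hint).mp h0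
    have hz' : ∀ᵐ x ∂(volume.restrict (Icc (-(R:ℝ)) R)), V x = 0 := by
      filter_upwards [hz] with y hy using hy
    rw [ae_iff, Measure.restrict_apply' measurableSet_Icc] at hz'
    exact hz'
  rw [ae_iff]
  have hsub : {x : ℝ | ¬ V x = 0} ⊆ ⋃ R : ℕ, ({x : ℝ | ¬ V x = 0} ∩ Icc (-(R:ℝ)) R) := by
    intro x hx
    obtain ⟨R, hR⟩ := exists_nat_ge |x|
    refine mem_iUnion.mpr ⟨R, hx, ?_, ?_⟩
    · linarith [neg_abs_le x]
    · linarith [le_abs_self x]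
  exact measure_mono_null hsub (measure_iUnion_null hae)

lemma exists_stop (V : ℝ → ℝ) (hVloc : LocallyIntegrable V volume) (hV0 : ∀ x, 0 ≤ V x)
    (hVne : ¬ (∀ᵐ x : ℝ ∂volume, V x = 0)) (x : ℝ) :
    ∃ k n : ℤ, x ∈ dyadicI k n ∧ stopCond V k n ∧
      ∀ k' n' : ℤ, dyadicI k n ⊆ dyadicI k' n' → stopCond V k' n' →
        dyadicI k' n' = dyadicI k n := by
  obtain ⟨R, hR⟩ := exists_pos_integral V hVloc hV0 hVne
  set c := ∫ y in Icc (-(R:ℝ)) (R:ℝ), V y with hcdef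
  -- large-scale failure
  obtain ⟨m, hm⟩ : ∃ m : ℕ, max ((R:ℝ) + |x| + 1) (1 / c) < 2 ^ m :=
    pow_unbounded_of_one_lt _ (by norm_num)
  set N : ℤ := (m : ℤ) with hNdef
  have hpowN : (2:ℝ) ^ N = 2 ^ m := zpow_natCast 2 m
  have hNbig : max ((R:ℝ) + |x| + 1) (1 / c) < 2 ^ N := by rw [hpowN]; exact hm
  have hN1 : (R:ℝ) + |x| + 1 < 2 ^ N := lt_of_le_of_lt (le_max_left _ _) hNbig
  have hN2 : 1 / c < 2 ^ N := lt_of_le_of_lt (le_max_right _ _) hNbig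
  have hfail : ¬ stopCond V ⌊x / 2 ^ N⌋ N := by
    intro hstop
    set kk := ⌊x / 2 ^ N⌋ with hkk
    have hxmem := mem_chain x N
    have h1 : (kk:ℝ) * 2 ^ N ≤ x := hxmem.1
    have h2 : x ≤ ((kk:ℝ) + 1) * 2 ^ N := hxmem.2
    have hRpos : (0:ℝ) ≤ R := Nat.cast_nonneg R
    have habs1 := neg_abs_le x
    have habs2 := le_abs_self x
    have hsub : Icc (-(R:ℝ)) R ⊆ bigI kk N := by
      rw [bigI]
      apply Icc_subset_Icc <;> nlinarith
    have hint : c ≤ ∫ y in bigI kk N, V y :=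
      setIntegral_mono_set (integrableOn_bigI V hVloc kk N)
        (Filter.Eventually.of_forall fun y => hV0 y)
        (HasSubset.Subset.eventuallyLE hsub)
    have : (1:ℝ) < 2 ^ N * ∫ y in bigI kk N, V y := by
      have hcN : 1 < 2 ^ N * c := by
        rw [div_lt_iff₀ hR] at hN2
        nlinarith
      nlinarith [two_zpow_pos' N]
    exact absurd hstop (by rw [stopCond]; push_neg; exact this)
  -- small-scale success
  set C := ∫ y in Icc (x - 9) (x + 9), V y with hCdef
  obtain ⟨m₂, hm₂⟩ : ∃ m₂ : ℕ, C < 2 ^ m₂ := pow_unbounded_of_one_lt _ (by norm_num)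
  set n₁ : ℤ := -(m₂ : ℤ) with hn₁def
  have hpow₂ : (2:ℝ) ^ n₁ * 2 ^ (m₂:ℤ) = 1 := by
    rw [← zpow_add₀ (by norm_num : (2:ℝ) ≠ 0)]; simp [hn₁def]
  have hpowm₂ : (2:ℝ) ^ (m₂:ℤ) = 2 ^ m₂ := zpow_natCast 2 m₂
  have hone : (2:ℝ) ^ n₁ ≤ 1 := by
    have h1 : (1:ℝ) ≤ 2 ^ (m₂:ℤ) := by rw [hpowm₂]; exact one_le_pow₀ (by norm_num)
    nlinarith [two_zpow_pos' n₁]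
  have hsmall : stopCond V ⌊x / 2 ^ n₁⌋ n₁ := by
    set kk := ⌊x / 2 ^ n₁⌋ with hkk
    have hxmem := mem_chain x n₁
    have h1 : (kk:ℝ) * 2 ^ n₁ ≤ x := hxmem.1
    have h2 : x ≤ ((kk:ℝ) + 1) * 2 ^ n₁ := hxmem.2
    have hp := two_zpow_pos' n₁
    have hsub : bigI kk n₁ ⊆ Icc (x - 9) (x + 9) := by
      rw [bigI]
      apply Icc_subset_Icc <;> nlinarith
    have hint : ∫ y in bigI kk n₁, V y ≤ C :=
      setIntegral_mono_set (integrableOn_Icc V hVloc _ _)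
        (Filter.Eventually.of_forall fun y => hV0 y)
        (HasSubset.Subset.eventuallyLE hsub)
    have h0 : 0 ≤ ∫ y in bigI kk n₁, V y :=
      setIntegral_nonneg measurableSet_Icc fun y _ => hV0 y
    rw [stopCond]
    have : 2 ^ n₁ * ∫ y in bigI kk n₁, V y ≤ 2 ^ n₁ * C :=
      mul_le_mul_of_nonneg_left hint hp.le
    have hCb : 2 ^ n₁ * C < 1 := by
      rw [← hpow₂, hpowm₂]
      nlinarith
    linarith
  -- take greatest stopping scale
  have hbdd : ∀ z : ℤ, stopCond V ⌊x / 2 ^ z⌋ z → z ≤ N := by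
    intro z hz
    by_contra hgt
    push_neg at hgt
    exact hfail (stopCond_mono V hVloc hV0 (chain_mono x hgt.le) hz)
  obtain ⟨n₀, hT₀, hmax⟩ :=
    Int.exists_greatest_of_bdd (P := fun z => stopCond V ⌊x / 2 ^ z⌋ z) ⟨N, hbdd⟩ ⟨n₁, hsmall⟩
  refine ⟨⌊x / 2 ^ n₀⌋, n₀, mem_chain x n₀, hT₀, ?_⟩
  intro k' n' hsub hs
  have hle : n₀ ≤ n' := scale_le hsub
  have hk' : k' = ⌊x / 2 ^ n'⌋ := ancestor_unique hsub (chain_mono x hle)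
  subst hk'
  have hle' : n' ≤ n₀ := hmax n' hs
  have : n' = n₀ := le_antisymm hle' hle
  rw [this]

theorem exists_maximal_dyadic_stopping_cover
    (V : ℝ → ℝ) (hVloc : LocallyIntegrable V volume) (hV0 : ∀ x, 0 ≤ V x)
    (hVne : ¬ (∀ᵐ x : ℝ ∂volume, V x = 0)) :
    ∃ S : Set (ℤ × ℤ),
      (∀ p ∈ S, ∀ q ∈ S, p ≠ q →
        Disjoint (interior (dyadicI p.1 p.2)) (interior (dyadicI q.1 q.2))) ∧
      volume (Set.univ \ ⋃ p ∈ S, dyadicI p.1 p.2) = 0 ∧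
      ∀ p ∈ S, stopCond V p.1 p.2 ∧
        ∀ k' n' : ℤ, dyadicI p.1 p.2 ⊆ dyadicI k' n' → stopCond V k' n' →
          dyadicI k' n' = dyadicI p.1 p.2 := by
  refine ⟨{p : ℤ × ℤ | stopCond V p.1 p.2 ∧ ∀ k' n' : ℤ,
      dyadicI p.1 p.2 ⊆ dyadicI k' n' → stopCond V k' n' →
        dyadicI k' n' = dyadicI p.1 p.2}, ?_, ?_, ?_⟩
  · rintro ⟨k, n⟩ hp ⟨k', n'⟩ hq hne
    obtain ⟨hp1, hp2⟩ := hp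
    obtain ⟨hq1, hq2⟩ := hq
    by_contra hdis
    rcases le_total n n' with h | h
    · have hsub := subset_of_interior_inter h hdis
      obtain ⟨e1, e2⟩ := dyadicI_inj (hp2 k' n' hsub hq1)
      subst e1; subst e2
      exact hne rfl
    · have hdis' : ¬ Disjoint (interior (dyadicI k' n')) (interior (dyadicI k n)) :=
        fun hd => hdis hd.symm
      have hsub := subset_of_interior_inter h hdis'
      obtain ⟨e1, e2⟩ := dyadicI_inj (hq2 k n hsub hp1)
      subst e1; subst e2
      exact hne rfl
  · have hempty : (Set.univ \ ⋃ p ∈ ({p : ℤ × ℤ | stopCond V p.1 p.2 ∧ ∀ k' n' : ℤ,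
        dyadicI p.1 p.2 ⊆ dyadicI k' n' → stopCond V k' n' →
          dyadicI k' n' = dyadicI p.1 p.2} : Set (ℤ × ℤ)), dyadicI p.1 p.2) = ∅ := by
      rw [diff_eq_empty]
      intro x _
      obtain ⟨k, n, hmem, hstop, hmaxi⟩ := exists_stop V hVloc hV0 hVne x
      exact mem_iUnion₂.mpr ⟨(k, n), ⟨hstop, hmaxi⟩, hmem⟩
    rw [hempty]
    exact measure_empty
  · rintro ⟨k, n⟩ hp
    exact hp
end
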